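/- Let (X,d) be a metric space, let p ≥ 1 be an integer, and let μ, ν, λ be Borel probability measures on X. Suppose there are Borel sets Sμ, Sν ⊆ X with μ(Sμ) = 1 and ν(Sν) = 1, and Lipschitz maps T : Sμ → X and F : Sν → X with T_♯(μ restricted to Sμ) = ν and F_♯(ν restricted to Sν) = λ. If μ is concentrated on a countably ℋ^p-rectifiable subset of X and λ is absolutely continuous with respect to ℋ^p, then ν is concentrated on a countably ℋ^p-rectifiable subset of X and ν is absolutely continuous with respect to ℋ^p. -/

import Mathlib

open MeasureTheory
open scoped ENNReal NNReal

/-- A subset `s` of a metric space `X` is countably `ℋ^p`-rectifiable if, up to an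
`ℋ^p`-negligible set, it is covered by countably many Lipschitz images of subsets of `ℝ^p`. -/
def CountablyHausdorffRectifiable {X : Type*} [MetricSpace X]
    [MeasurableSpace X] [BorelSpace X] (p : ℕ) (s : Set X) : Prop :=
  ∃ (A : ℕ → Set (EuclideanSpace ℝ (Fin p))) (f : ℕ → EuclideanSpace ℝ (Fin p) → X)
    (L : ℕ → ℝ≥0),
    (∀ i, LipschitzOnWith (L i) (f i) (A i)) ∧
      μH[(p : ℝ)] (s \ ⋃ i, f i '' A i) = 0

open Set Filter Metric Topology in
/-- Auxiliary: a Lebesgue-null subset of Euclidean space is `ℋ^p`-null. -/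
private lemma hausdorff_null_of_volume_null {p : ℕ} {N : Set (EuclideanSpace ℝ (Fin p))}
    (hN : volume N = 0) : μH[(p:ℝ)] N = 0 := by
  set M := toMeasurable volume N with hMdef
  have hMmeas : MeasurableSet M := measurableSet_toMeasurable _ _
  have hMvol : volume M = 0 := by rw [hMdef, measure_toMeasurable, hN]
  have hNM : N ⊆ M := subset_toMeasurable _ _
  refine le_antisymm (le_trans (measure_mono hNM) ?_) (zero_le)
  set e := (MeasurableEquiv.toLp 2 (Fin p → ℝ)).symm
  have hcoe : ⇑e = ⇑(WithLp.equiv 2 (Fin p → ℝ)) := rfl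
  have hvol_img : volume (⇑e '' M) = 0 := by
    have hpres : MeasurePreserving e.symm :=
      (EuclideanSpace.volume_preserving_symm_measurableEquiv_toLp (Fin p)).symm
    have : ⇑e '' M = ⇑e.symm ⁻¹' M := by
      ext x; simp [MeasurableEquiv.image_eq_preimage_symm]
    rw [this, hpres.measure_preimage hMmeas.nullMeasurableSet, hMvol]
  have hH_img : μH[(p:ℝ)] (⇑e '' M) = 0 := by
    have h0 := MeasureTheory.hausdorffMeasure_pi_real (ι := Fin p)
    have hc : ((Fintype.card (Fin p) : ℝ)) = (p:ℝ) := by simp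
    rw [← hvol_img, ← h0, hc]
  have hlip : LipschitzWith ((Fintype.card (Fin p) : ℝ≥0) ^ (1/(2:ℝ≥0∞)).toReal)
      ⇑(WithLp.equiv 2 (Fin p → ℝ)).symm :=
    (PiLp.antilipschitzWith_ofLp 2 (fun _ : Fin p => ℝ)).to_rightInverse
      (WithLp.equiv 2 (Fin p → ℝ)).right_inv
  have hM_eq : M = ⇑(WithLp.equiv 2 (Fin p → ℝ)).symm '' (⇑e '' M) := by
    rw [hcoe, ← Set.image_comp]; simp
  calc μH[(p:ℝ)] M = μH[(p:ℝ)] (⇑(WithLp.equiv 2 (Fin p → ℝ)).symm '' (⇑e '' M)) := by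
        rw [← hM_eq]
    _ ≤ _ ^ (p:ℝ) * μH[(p:ℝ)] (⇑e '' M) := hlip.hausdorffMeasure_image_le (by positivity) _
    _ = 0 := by rw [hH_img, mul_zero]

open Set Filter Metric Topology in
/-- Auxiliary: every measurable set in Euclidean space is, up to a Lebesgue-null set,
a countable union of compact sets. -/
private lemma exists_compact_exhaustion' {p : ℕ} (H : Set (EuclideanSpace ℝ (Fin p)))
    (hH : MeasurableSet H) :
    ∃ K : ℕ → Set (EuclideanSpace ℝ (Fin p)),
      (∀ j, IsCompact (K j)) ∧ volume (H \ ⋃ j, K j) = 0 := by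
  have hfin : ∀ n : ℕ, volume (H ∩ closedBall 0 n) ≠ ⊤ := fun n =>
    ((measure_mono inter_subset_right).trans_lt measure_closedBall_lt_top).ne
  have hmeasn : ∀ n : ℕ, MeasurableSet (H ∩ closedBall 0 n) := fun n =>
    hH.inter measurableSet_closedBall
  have h : ∀ n k : ℕ, ∃ K ⊆ H ∩ closedBall 0 n, IsCompact K ∧
      volume ((H ∩ closedBall 0 n) \ K) < ((k:ℝ≥0∞))⁻¹ := by
    intro n k
    rcases eq_or_ne k 0 with rfl | hk
    · exact ⟨∅, empty_subset _, isCompact_empty, by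
        simp only [Nat.cast_zero, ENNReal.inv_zero]
        exact (measure_mono diff_subset).trans_lt (hfin n).lt_top⟩
    · exact (hmeasn n).exists_isCompact_diff_lt (hfin n) (by simp [hk])
  choose K0 hKsub hKcomp hKlt using fun q : ℕ × ℕ => h q.1 q.2
  have hzero : ∀ n : ℕ, volume ((H ∩ closedBall 0 n) \ ⋃ q, K0 q) = 0 := by
    intro n
    by_contra hne
    obtain ⟨k, hk⟩ := ENNReal.exists_inv_nat_lt hne
    have hle : volume ((H ∩ closedBall 0 n) \ ⋃ q, K0 q)
        ≤ volume ((H ∩ closedBall 0 n) \ K0 (n, k)) :=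
      measure_mono (diff_subset_diff_right (subset_iUnion K0 (n, k)))
    exact lt_irrefl _ (hk.trans (hle.trans_lt (hKlt (n, k))))
  have hcover : H \ ⋃ q, K0 q ⊆ ⋃ n : ℕ, ((H ∩ closedBall 0 n) \ ⋃ q, K0 q) := by
    intro x hx
    obtain ⟨n, hn⟩ : ∃ n : ℕ, x ∈ closedBall (0 : EuclideanSpace ℝ (Fin p)) n := by
      obtain ⟨n, hn⟩ := exists_nat_ge (dist x 0)
      exact ⟨n, by simpa [mem_closedBall] using hn⟩
    exact mem_iUnion.2 ⟨n, ⟨⟨hx.1, hn⟩, hx.2⟩⟩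
  have hnull : volume (H \ ⋃ q, K0 q) = 0 := by
    refine le_antisymm ((measure_mono hcover).trans ?_) (zero_le)
    calc volume (⋃ n : ℕ, ((H ∩ closedBall 0 n) \ ⋃ q, K0 q))
        ≤ ∑' n : ℕ, volume ((H ∩ closedBall 0 n) \ ⋃ q, K0 q) := measure_iUnion_le _
      _ = 0 := by simp [hzero]
  set d := Denumerable.eqv (ℕ × ℕ)
  refine ⟨fun n => K0 (d.symm n), fun n => hKcomp _, ?_⟩
  have : ⋃ n : ℕ, K0 (d.symm n) = ⋃ q, K0 q := d.symm.surjective.iUnion_comp _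
  rw [this]
  exact hnull

open Set Filter Metric Topology in
/-- Auxiliary: the closure of the image of a bounded set under a Lipschitz-on map
is again a Lipschitz image of a subset of the (proper) source space. -/
private lemma exists_lipschitz_image_closure {X : Type*} [MetricSpace X] [Nonempty X]
    {E : Type*} [MetricSpace E] [ProperSpace E]
    {c : ℝ≥0} {S : Set E} (hS : Bornology.IsBounded S) {g : E → X}
    (hg : LipschitzOnWith c g S) :
    ∃ (A : Set E) (f : E → X), LipschitzOnWith c f A ∧ closure (g '' S) ⊆ f '' A := by
  classical
  set P : E → Prop := fun a => ∃ x : X, Tendsto g (𝓝[S] a) (𝓝 x) with hP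
  set f : E → X := fun a => if h : P a then h.choose else Classical.arbitrary X with hf
  set A : Set E := {a | a ∈ closure S ∧ P a} with hA
  have key : ∀ a ∈ A, Tendsto g (𝓝[S] a) (𝓝 (f a)) := by
    intro a ha
    simp only [hf, dif_pos ha.2]
    exact ha.2.choose_spec
  refine ⟨A, f, ?_, ?_⟩
  · refine LipschitzOnWith.of_dist_le_mul fun a ha b hb => ?_
    haveI h1 : (𝓝[S] a).NeBot := mem_closure_iff_nhdsWithin_neBot.1 ha.1
    haveI h2 : (𝓝[S] b).NeBot := mem_closure_iff_nhdsWithin_neBot.1 hb.1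
    set l := (𝓝[S] a) ×ˢ (𝓝[S] b) with hl
    have hfst : Tendsto Prod.fst l (𝓝[S] a) := tendsto_fst
    have hsnd : Tendsto Prod.snd l (𝓝[S] b) := tendsto_snd
    have hL : Tendsto (fun q : E × E => dist (g q.1) (g q.2)) l
        (𝓝 (dist (f a) (f b))) :=
      ((key a ha).comp hfst).dist ((key b hb).comp hsnd)
    have hR : Tendsto (fun q : E × E => (c : ℝ) * dist q.1 q.2) l
        (𝓝 ((c : ℝ) * dist a b)) :=
      ((hfst.mono_right nhdsWithin_le_nhds).dist
        (hsnd.mono_right nhdsWithin_le_nhds)).const_mul _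
    refine le_of_tendsto_of_tendsto hL hR ?_
    have ea : ∀ᶠ q : E × E in l, q.1 ∈ S := hfst.eventually eventually_mem_nhdsWithin
    have eb : ∀ᶠ q : E × E in l, q.2 ∈ S := hsnd.eventually eventually_mem_nhdsWithin
    filter_upwards [ea, eb] with q hq1 hq2
    exact hg.dist_le_mul _ hq1 _ hq2
  · intro x hx
    have hSne : S.Nonempty := by
      rcases S.eq_empty_or_nonempty with rfl | h
      · simp at hx
      · exact h
    set F := Filter.comap g (𝓝 x) ⊓ 𝓟 S with hF
    haveI hFne : F.NeBot := by
      rw [hF, Filter.inf_principal_neBot_iff]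
      intro U hU
      obtain ⟨V, hV, hVU⟩ := Filter.mem_comap.1 hU
      obtain ⟨y, hyV, z, hzS, hzy⟩ := mem_closure_iff_nhds.1 hx V hV
      exact ⟨z, hVU (by simp [Set.mem_preimage, hzy, hyV]), hzS⟩
    have hFc : F ≤ 𝓟 (closure S) :=
      inf_le_right.trans (Filter.principal_mono.2 subset_closure)
    obtain ⟨a, haS, hca⟩ := hS.isCompact_closure.exists_clusterPt hFc
    have htd : Tendsto g (𝓝[S] a) (𝓝 x) := by
      rw [Metric.tendsto_nhdsWithin_nhds]
      intro ε hε
      have hδpos : (0:ℝ) < ε / (4 * ((c:ℝ) + 1)) := by positivity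
      refine ⟨ε / (4 * ((c:ℝ) + 1)), hδpos, ?_⟩
      have hW : (Metric.ball a (ε / (4 * ((c:ℝ) + 1))) ∩
          (g ⁻¹' Metric.ball x (ε/2) ∩ S)) ∈ 𝓝 a ⊓ F := by
        refine Filter.inter_mem (Filter.mem_inf_of_left
          (Metric.ball_mem_nhds a hδpos)) (Filter.mem_inf_of_right ?_)
        exact Filter.inter_mem
          (Filter.mem_inf_of_left
            (Filter.preimage_mem_comap (Metric.ball_mem_nhds x (by positivity))))
          (Filter.mem_inf_of_right (Filter.mem_principal_self S))
      obtain ⟨v, hv⟩ := hca.nonempty_of_mem hW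
      intro u huS hud
      have hdgv : dist (g v) x < ε/2 := by simpa [Metric.mem_ball] using hv.2.1
      have hvS : v ∈ S := hv.2.2
      have hva : dist v a < ε / (4 * ((c:ℝ) + 1)) := by simpa [Metric.mem_ball] using hv.1
      have huv : dist u v ≤ dist u a + dist v a := dist_triangle_right u v a
      calc dist (g u) x ≤ dist (g u) (g v) + dist (g v) x := dist_triangle _ _ _
        _ ≤ (c:ℝ) * dist u v + dist (g v) x :=
            add_le_add_left (hg.dist_le_mul _ huS _ hvS) _
        _ < (c:ℝ) * dist u v + ε/2 := by linarith
        _ ≤ (c:ℝ) * (ε / (4 * ((c:ℝ) + 1)) + ε / (4 * ((c:ℝ) + 1))) + ε/2 := by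
            have h1 : dist u v ≤ ε / (4 * ((c:ℝ) + 1)) + ε / (4 * ((c:ℝ) + 1)) :=
              huv.trans (add_le_add hud.le hva.le)
            have h2 := mul_le_mul_of_nonneg_left h1 c.coe_nonneg
            linarith
        _ ≤ ε := by
            have hc0 : (0:ℝ) ≤ (c:ℝ) := c.coe_nonneg
            have heq : (c:ℝ) * (ε / (4 * ((c:ℝ) + 1)) + ε / (4 * ((c:ℝ) + 1)))
                = ((c:ℝ) * ε) / (2 * ((c:ℝ) + 1)) := by
              field_simp
              ring
            rw [heq]
            have h2 : ((c:ℝ) * ε) / (2 * ((c:ℝ) + 1)) ≤ ε/2 := by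
              rw [div_le_div_iff₀ (by positivity) (by norm_num)]
              nlinarith
            linarith
    have haP : P a := ⟨x, htd⟩
    refine ⟨a, ⟨haS, haP⟩, ?_⟩
    haveI : (𝓝[S] a).NeBot := mem_closure_iff_nhdsWithin_neBot.1 haS
    exact tendsto_nhds_unique (key a ⟨haS, haP⟩) htd

/-- **Propagation of rectifiability and absolute continuity along Lipschitz transport maps.**
Let `μ, ν, lam` be Borel probability measures on `X`, with Lipschitz maps `T` (on a full
measure set `Sμ` of `μ`) and `F` (on a full measure set `Sν` of `ν`) pushing `μ` to `ν` and
`ν` to `lam` respectively. If `μ` is concentrated on a countably `ℋ^p`-rectifiable set and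
`lam ≪ ℋ^p`, then `ν` is concentrated on a countably `ℋ^p`-rectifiable set and `ν ≪ ℋ^p`. -/
theorem rectifiable_and_ac_propagation {X : Type*} [MetricSpace X]
    [MeasurableSpace X] [BorelSpace X]
    (p : ℕ) (hp : 1 ≤ p)
    (μ ν lam : Measure X)
    [IsProbabilityMeasure μ] [IsProbabilityMeasure ν] [IsProbabilityMeasure lam]
    (Sμ Sν : Set X) (hSμm : MeasurableSet Sμ) (hSνm : MeasurableSet Sν)
    (hμS : μ Sμ = 1) (hνS : ν Sν = 1)
    (T F : X → X) (LT LF : ℝ≥0)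
    (hT : LipschitzOnWith LT T Sμ) (hF : LipschitzOnWith LF F Sν)
    (hTmap : (μ.restrict Sμ).map T = ν) (hFmap : (ν.restrict Sν).map F = lam)
    (hrect : ∃ s : Set X, CountablyHausdorffRectifiable p s ∧ μ sᶜ = 0)
    (hlam : lam ≪ μH[(p : ℝ)]) :
    (∃ s : Set X, CountablyHausdorffRectifiable p s ∧ ν sᶜ = 0) ∧ ν ≪ μH[(p : ℝ)] := by
  classical
  have hXne : Nonempty X := by
    by_contra h
    rw [not_nonempty_iff] at h
    have h1 : μ Set.univ = 1 := measure_univ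
    rw [Set.univ_eq_empty_iff.2 h, measure_empty] at h1
    exact zero_ne_one h1
  have hp0 : (0:ℝ) ≤ (p:ℝ) := by positivity
  -- absolute continuity of ν
  have hFae : AEMeasurable F (ν.restrict Sν) := by
    by_contra h
    rw [Measure.map_of_not_aemeasurable h] at hFmap
    exact IsProbabilityMeasure.ne_zero lam hFmap.symm
  have hνSc : ν Sνᶜ = 0 := by
    have h1 := measure_compl hSνm (measure_ne_top ν Sν)
    rw [hνS, measure_univ] at h1
    simpa using h1
  have hac : ν ≪ μH[(p:ℝ)] := by
    intro A hA
    have h1 : μH[(p:ℝ)] (F '' (A ∩ Sν)) = 0 := by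
      refine le_antisymm
        (((hF.mono Set.inter_subset_right).hausdorffMeasure_image_le hp0).trans ?_)
        (zero_le)
      have h0 : μH[(p:ℝ)] (A ∩ Sν) = 0 :=
        le_antisymm ((measure_mono Set.inter_subset_left).trans hA.le) (zero_le)
      rw [h0, mul_zero]
    have h2 : lam (F '' (A ∩ Sν)) = 0 := hlam h1
    have h3 : ν (A ∩ Sν) = 0 := by
      have heq : ν (A ∩ Sν) = (ν.restrict Sν) (A ∩ Sν) := by
        rw [Measure.restrict_apply' hSνm, Set.inter_assoc, Set.inter_self]
      rw [heq]
      refine le_antisymm ?_ (zero_le)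
      calc (ν.restrict Sν) (A ∩ Sν)
          ≤ (ν.restrict Sν) (F ⁻¹' (F '' (A ∩ Sν))) :=
            measure_mono (Set.subset_preimage_image _ _)
        _ ≤ ((ν.restrict Sν).map F) (F '' (A ∩ Sν)) := Measure.le_map_apply hFae _
        _ = 0 := by rw [hFmap]; exact h2
    refine le_antisymm ?_ (zero_le)
    calc ν A ≤ ν (A ∩ Sν) + ν (A \ Sν) := measure_le_inter_add_diff _ _ _
      _ ≤ 0 + ν Sνᶜ := by
          refine add_le_add h3.le (measure_mono fun x hx => hx.2)
      _ = 0 := by rw [hνSc, zero_add]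
  refine ⟨?_, hac⟩
  -- concentration of ν on a rectifiable set
  obtain ⟨s, ⟨A0, f0, L0, hLip0, hcov0⟩, hμs⟩ := hrect
  have hTae : AEMeasurable T (μ.restrict Sμ) := by
    by_contra h
    rw [Measure.map_of_not_aemeasurable h] at hTmap
    exact IsProbabilityMeasure.ne_zero ν hTmap.symm
  set U : Set X := ⋃ i, f0 i '' A0 i with hU
  set B : ℕ → Set (EuclideanSpace ℝ (Fin p)) := fun i => A0 i ∩ f0 i ⁻¹' Sμ with hB
  have hgLip : ∀ i, LipschitzOnWith (LT * L0 i) (T ∘ f0 i) (B i) := fun i =>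
    hT.comp ((hLip0 i).mono Set.inter_subset_left) (fun a ha => ha.2)
  choose K hKcomp hKnull using fun i =>
    exists_compact_exhaustion' (toMeasurable volume (B i)) (measurableSet_toMeasurable _ _)
  have hbdd : ∀ i j, Bornology.IsBounded (B i ∩ K i j) := fun i j =>
    ((hKcomp i j).isBounded).subset Set.inter_subset_right
  choose A' f' hlip' hcov' using fun q : ℕ × ℕ =>
    exists_lipschitz_image_closure (hbdd q.1 q.2)
      ((hgLip q.1).mono Set.inter_subset_left)
  set e : ℕ ≃ ℕ × ℕ := (Denumerable.eqv (ℕ × ℕ)).symm with he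
  set V : ℕ × ℕ → Set X := fun q => closure ((T ∘ f0 q.1) '' (B q.1 ∩ K q.1 q.2)) with hV
  set R : Set X := ⋃ q : ℕ × ℕ, V q with hR
  have hRmeas : MeasurableSet R :=
    MeasurableSet.iUnion fun q => isClosed_closure.measurableSet
  set Z : Set X := (T '' (Sμ ∩ (s \ U))) ∪ ⋃ i, (T ∘ f0 i) '' (B i \ ⋃ j, K i j) with hZ
  have hZnull : μH[(p:ℝ)] Z = 0 := by
    rw [hZ]
    refine measure_union_null ?_ (measure_iUnion_null fun i => ?_)
    · refine le_antisymm
        (((hT.mono Set.inter_subset_left).hausdorffMeasure_image_le hp0).trans ?_)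
        (zero_le)
      have h5 : μH[(p:ℝ)] (Sμ ∩ (s \ U)) = 0 :=
        le_antisymm ((measure_mono Set.inter_subset_right).trans hcov0.le) (zero_le)
      rw [h5, mul_zero]
    · refine le_antisymm
        ((((hgLip i).mono Set.diff_subset).hausdorffMeasure_image_le hp0).trans ?_)
        (zero_le)
      have h6 : μH[(p:ℝ)] (B i \ ⋃ j, K i j) = 0 := by
        have hsub : B i \ ⋃ j, K i j ⊆ toMeasurable volume (B i) \ ⋃ j, K i j :=
          Set.diff_subset_diff_left (subset_toMeasurable _ _)
        exact le_antisymm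
          ((measure_mono hsub).trans (hausdorff_null_of_volume_null (hKnull i)).le)
          (zero_le)
      rw [h6, mul_zero]
  set Z' : Set X := toMeasurable μH[(p:ℝ)] Z with hZ'
  have hZ'null : μH[(p:ℝ)] Z' = 0 := by rw [hZ', measure_toMeasurable]; exact hZnull
  set sfin : Set X := R ∪ Z' with hsfin
  have hsfinmeas : MeasurableSet sfin := hRmeas.union (measurableSet_toMeasurable _ _)
  refine ⟨sfin, ⟨fun n => A' (e n), fun n => f' (e n), fun n => LT * L0 (e n).1,
    fun n => hlip' (e n), ?_⟩, ?_⟩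
  · have hcover : R ⊆ ⋃ n, f' (e n) '' A' (e n) := by
      intro x hx
      obtain ⟨q, hq⟩ := Set.mem_iUnion.1 hx
      refine Set.mem_iUnion.2 ⟨e.symm q, ?_⟩
      have := hcov' q hq
      simpa [Equiv.apply_symm_apply] using this
    refine le_antisymm ((measure_mono ?_).trans hZ'null.le) (zero_le)
    intro x hx
    rcases hx.1 with hxR | hxZ'
    · exact absurd (hcover hxR) hx.2
    · exact hxZ'
  · rw [← hTmap, Measure.map_apply_of_aemeasurable hTae hsfinmeas.compl]
    set s0 : Set X := Sμ ∩ (toMeasurable μ sᶜ)ᶜ with hs0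
    have hsub : T ⁻¹' sfinᶜ ⊆ s0ᶜ := by
      intro x hx hxs0
      have hxSμ : x ∈ Sμ := hxs0.1
      have hxs : x ∈ s := by
        by_contra hxs
        exact hxs0.2 (subset_toMeasurable _ _ hxs)
      apply hx
      by_cases hxU : x ∈ U
      · obtain ⟨i, hi⟩ := Set.mem_iUnion.1 hxU
        obtain ⟨a, haA, hax⟩ := hi
        have haB : a ∈ B i := ⟨haA, by rw [Set.mem_preimage, hax]; exact hxSμ⟩
        by_cases haK : a ∈ ⋃ j, K i j
        · obtain ⟨j, hj⟩ := Set.mem_iUnion.1 haK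
          refine Set.mem_union_left _ (Set.mem_iUnion.2 ⟨(i, j), ?_⟩)
          exact subset_closure ⟨a, ⟨haB, hj⟩, by simp [Function.comp, hax]⟩
        · refine Set.mem_union_right _ (subset_toMeasurable _ _ ?_)
          exact Set.mem_union_right _
            (Set.mem_iUnion.2 ⟨i, ⟨a, ⟨haB, haK⟩, by simp [Function.comp, hax]⟩⟩)
      · refine Set.mem_union_right _ (subset_toMeasurable _ _ ?_)
        exact Set.mem_union_left _ ⟨x, ⟨hxSμ, hxs, hxU⟩, rfl⟩
    refine le_antisymm ((measure_mono hsub).trans ?_) (zero_le)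
    have h7 : (μ.restrict Sμ) s0ᶜ = 0 := by
      rw [hs0, Set.compl_inter, compl_compl]
      refine measure_union_null ?_ ?_
      · rw [Measure.restrict_apply' hSμm]
        simp
      · refine le_antisymm ?_ (zero_le)
        calc (μ.restrict Sμ) (toMeasurable μ sᶜ)
            ≤ μ (toMeasurable μ sᶜ) := by
              rw [Measure.restrict_apply' hSμm]
              exact measure_mono Set.inter_subset_left
          _ = μ sᶜ := measure_toMeasurable _
          _ = 0 := hμs
    exact h7.le
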